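/- arXiv:1710.08820 — 2 statements merged into one kernel-verified Lean document; each statement's English description precedes it below -/
import Mathlib

section
/- Let T : {0,1}* → {0,1}* be an aperiodic morphism (T(0) and T(1) are not powers of a common word) such that T(1) is a prefix of T(01). Then T, extended to infinite binary words, is either order-preserving on infinite words or order-reversing on infinite words. -/
/-- Apply a binary morphism to a finite word. -/
def applyM (T : Bool → List Bool) (w : List Bool) : List Bool := (w.map T).flatten

/-- Strict lexicographic order on finite binary words (false < true). -/
def LexLt (u v : List Bool) : Prop := List.Lex (· < ·) u v

/-- Lexicographic order: u ≤ v iff u is a prefix of v or they differ with a smaller letter. -/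
def LexLe (u v : List Bool) : Prop := List.Lex (· < ·) u v ∨ u = v

/-- Image of an infinite word under a morphism (letterwise, concatenated). -/
def applyInf (T : Bool → List Bool) (u : ℕ → Bool) : ℕ → Bool :=
  fun n => (applyM T ((List.range (n + 1)).map u)).getD n false

/-- Strict lexicographic order on infinite binary words (false < true). -/
def InfLt (u v : ℕ → Bool) : Prop := ∃ n, (∀ i < n, u i = v i) ∧ u n < v n

/-- n-fold concatenation power of a word. -/
def wpow {α : Type*} (x : List α) (n : ℕ) : List α := (List.replicate n x).flatten

/-- A word is primitive if it is not a power uⁿ with n ≥ 2. -/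
def PrimitiveW {α : Type*} (x : List α) : Prop := ∀ (u : List α) (n : ℕ), 2 ≤ n → x ≠ wpow u n

/-- A binary morphism is periodic if T(0), T(1) are powers of a common word. -/
def PeriodicM (T : Bool → List Bool) : Prop :=
  ∃ (t : List Bool) (i j : ℕ), T false = wpow t i ∧ T true = wpow t j

/-- The i-th shift of an infinite word. -/
def shiftW {α : Type*} (ω : ℕ → α) (i : ℕ) : ℕ → α := fun n => ω (i + n)

/-- The word w occurs in ω at position i. -/
def OccursAt {α : Type*} (ω : ℕ → α) (w : List α) (i : ℕ) : Prop :=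
  ∀ k < w.length, w[k]? = some (ω (i + k))

/-- w is a factor of ω. -/
def IsFactor {α : Type*} (ω : ℕ → α) (w : List α) : Prop := ∃ i, OccursAt ω w i

/-- Occurrences at i and i' of length-n factors induce the same permutation:
the relative lexicographic order of the shifts starting inside the occurrences agree. -/
def SamePermAt (ω : ℕ → Bool) (n i i' : ℕ) : Prop :=
  ∀ k < n, ∀ l < n,
    (InfLt (shiftW ω (i + k)) (shiftW ω (i + l)) ↔ InfLt (shiftW ω (i' + k)) (shiftW ω (i' + l)))

/-- Two factors of ω have the same permutation: some occurrences induce equal patterns. -/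
def SamePerm (ω : ℕ → Bool) (u v : List Bool) : Prop :=
  ∃ i i', OccursAt ω u i ∧ OccursAt ω v i' ∧ u.length = v.length ∧
    SamePermAt ω u.length i i'

/-- w is a right special factor of ω. -/
def RightSpecial (ω : ℕ → Bool) (w : List Bool) : Prop :=
  IsFactor ω (w ++ [false]) ∧ IsFactor ω (w ++ [true])

/-- w is a left special factor of ω. -/
def LeftSpecial (ω : ℕ → Bool) (w : List Bool) : Prop :=
  IsFactor ω (false :: w) ∧ IsFactor ω (true :: w)

/-- An infinite word is aperiodic: no two distinct shifts are equal. -/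
def AperiodicW {α : Type*} (ω : ℕ → α) : Prop := ∀ i j : ℕ, i ≠ j → shiftW ω i ≠ shiftW ω j

/-- A finite word has period q. -/
def HasPeriod {α : Type*} (w : List α) (q : ℕ) : Prop :=
  ∀ i, i + q < w.length → w[i]? = w[i + q]?

/-- Uniform recurrence: every long enough factor contains every short factor. -/
def UniformlyRecurrent {α : Type*} (s : ℕ → α) : Prop :=
  ∀ ℓ : ℕ, ∃ L : ℕ, ∀ w z : List α, IsFactor s w → w.length = L →
    IsFactor s z → z.length = ℓ → z <:+: w

/-- Not eventually periodic. -/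
def NotEventuallyPeriodic {α : Type*} (s : ℕ → α) : Prop :=
  ¬ ∃ p : ℕ, 1 ≤ p ∧ ∃ N : ℕ, ∀ n ≥ N, s (n + p) = s n

/-- Concatenation of a finite word with an infinite word. -/
def catInf (w : List Bool) (u : ℕ → Bool) : ℕ → Bool :=
  fun n => if h : n < w.length then w.get ⟨n, h⟩ else u (n - w.length)

section Aux

lemma wpow_one' (t : List Bool) : wpow t 1 = t := by simp [wpow]

lemma wpow_add' (t : List Bool) (i j : ℕ) : wpow t (i + j) = wpow t i ++ wpow t j := by
  rw [wpow, wpow, wpow, List.replicate_add, List.flatten_append]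

lemma applyM_append (T : Bool → List Bool) (w w' : List Bool) :
    applyM T (w ++ w') = applyM T w ++ applyM T w' := by
  simp [applyM]

lemma applyM_cons (T : Bool → List Bool) (x : Bool) (w : List Bool) :
    applyM T (x :: w) = T x ++ applyM T w := by
  simp [applyM]

lemma le_length_applyM (T : Bool → List Bool) (h1 : ∀ x, 1 ≤ (T x).length)
    (w : List Bool) : w.length ≤ (applyM T w).length := by
  induction w with
  | nil => simp [applyM]
  | cons x w ih =>
    have := h1 x
    rw [applyM_cons, List.length_append, List.length_cons]
    omega

lemma getD_of_prefix {l l' : List Bool} (h : l <+: l') {j : ℕ} (hj : j < l.length) :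
    l'.getD j false = l.getD j false := by
  obtain ⟨t, rfl⟩ := h
  exact List.getD_append _ _ _ _ hj

lemma applyM_range_prefix (T : Bool → List Bool) (u : ℕ → Bool) {N M : ℕ} (h : N ≤ M) :
    applyM T ((List.range N).map u) <+: applyM T ((List.range M).map u) := by
  obtain ⟨k, rfl⟩ := Nat.exists_eq_add_of_le h
  rw [List.range_add, List.map_append, applyM_append]
  exact List.prefix_append _ _

lemma length_le_applyM_range (T : Bool → List Bool) (h1 : ∀ x, 1 ≤ (T x).length)
    (u : ℕ → Bool) (N : ℕ) : N ≤ (applyM T ((List.range N).map u)).length := by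
  have := le_length_applyM T h1 ((List.range N).map u)
  simpa using this

lemma applyInf_eq_getD (T : Bool → List Bool) (h1 : ∀ x, 1 ≤ (T x).length)
    (u : ℕ → Bool) (N j : ℕ) (hj : j < (applyM T ((List.range N).map u)).length) :
    applyInf T u j = (applyM T ((List.range N).map u)).getD j false := by
  have hlen : j < (applyM T ((List.range (j + 1)).map u)).length :=
    lt_of_lt_of_le (Nat.lt_succ_self j) (length_le_applyM_range T h1 u (j + 1))
  have e1 := getD_of_prefix (applyM_range_prefix T u (le_max_left N (j + 1))) hj
  have e2 := getD_of_prefix (applyM_range_prefix T u (le_max_right N (j + 1))) hlen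
  show (applyM T ((List.range (j + 1)).map u)).getD j false = _
  rw [← e1, ← e2]

lemma applyM_range_succ_cons (T : Bool → List Bool) (u : ℕ → Bool) (n : ℕ) :
    applyM T ((List.range (n + 1)).map u)
      = T (u 0) ++ applyM T ((List.range n).map (shiftW u 1)) := by
  rw [List.range_succ_eq_map, List.map_cons, applyM_cons, List.map_map]
  congr 2
  apply List.map_congr_left
  intro k _
  simp [shiftW, Nat.add_comm, Nat.succ_eq_add_one, Function.comp]

lemma applyInf_shift_one (T : Bool → List Bool) (h1 : ∀ x, 1 ≤ (T x).length)
    (u : ℕ → Bool) (j : ℕ) :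
    applyInf T u ((T (u 0)).length + j) = applyInf T (shiftW u 1) j := by
  have hL : 1 ≤ (T (u 0)).length := h1 _
  have hlen : j < (applyM T ((List.range ((T (u 0)).length + j)).map (shiftW u 1))).length := by
    have := length_le_applyM_range T h1 (shiftW u 1) ((T (u 0)).length + j)
    omega
  show (applyM T ((List.range ((T (u 0)).length + j + 1)).map u)).getD _ false = _
  rw [applyM_range_succ_cons, List.getD_append_right _ _ _ _ (by omega),
    Nat.add_sub_cancel_left]
  exact (applyInf_eq_getD T h1 (shiftW u 1) _ j hlen).symm

lemma applyInf_prefix_letter (T : Bool → List Bool) (h1 : ∀ x, 1 ≤ (T x).length)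
    (u : ℕ → Bool) (j : ℕ) (hj : j < (T (u 0)).length) :
    applyInf T u j = (T (u 0)).getD j false := by
  have h1app : applyM T ((List.range 1).map u) = T (u 0) := by
    show (List.map (T ∘ u) (List.range 1)).flatten = T (u 0)
    rw [List.range_succ, List.range_zero]
    simp
  have hlen : j < (applyM T ((List.range 1).map u)).length := by rw [h1app]; exact hj
  rw [applyInf_eq_getD T h1 u 1 j hlen, h1app]

lemma shiftW_shiftW (u : ℕ → Bool) (i j : ℕ) : shiftW (shiftW u i) j = shiftW u (i + j) := by
  funext n
  simp [shiftW, Nat.add_assoc]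

lemma applyInf_shift (T : Bool → List Bool) (h1 : ∀ x, 1 ≤ (T x).length)
    (u : ℕ → Bool) (n : ℕ) : ∀ j : ℕ,
    applyInf T u ((applyM T ((List.range n).map u)).length + j) = applyInf T (shiftW u n) j := by
  induction n generalizing u with
  | zero =>
    intro j
    have : shiftW u 0 = u := by funext k; simp [shiftW]
    simp [applyM, this]
  | succ n ih =>
    intro j
    rw [applyM_range_succ_cons, List.length_append]
    have e : (T (u 0)).length + (applyM T ((List.range n).map (shiftW u 1))).length + j
        = (T (u 0)).length + ((applyM T ((List.range n).map (shiftW u 1))).length + j) := by omega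
    rw [e, applyInf_shift_one T h1 u, ih (shiftW u 1) j, shiftW_shiftW, Nat.add_comm 1 n]

lemma comm_of_append_comm : ∀ n (a b : List Bool), a.length + b.length ≤ n →
    a ++ b = b ++ a → ∃ t i j, a = wpow t i ∧ b = wpow t j := by
  intro n
  induction n with
  | zero =>
    intro a b hlen _
    have ha : a = [] := List.eq_nil_of_length_eq_zero (by omega)
    have hb : b = [] := List.eq_nil_of_length_eq_zero (by omega)
    exact ⟨[], 0, 0, by simp [ha, wpow], by simp [hb, wpow]⟩
  | succ n ih =>
    intro a b hlen hcomm
    rcases eq_or_ne a [] with rfl | ha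
    · exact ⟨b, 0, 1, by simp [wpow], (wpow_one' b).symm⟩
    rcases eq_or_ne b [] with rfl | hb
    · exact ⟨a, 1, 0, (wpow_one' a).symm, by simp [wpow]⟩
    have ha1 : 1 ≤ a.length := List.length_pos_iff.2 ha
    have hb1 : 1 ≤ b.length := List.length_pos_iff.2 hb
    rcases le_total a.length b.length with hle | hle
    · have hab : a <+: b :=
        List.prefix_of_prefix_length_le ⟨b, hcomm⟩ (List.prefix_append b a) hle
      obtain ⟨b₁, rfl⟩ := hab
      have hcomm' : a ++ b₁ = b₁ ++ a := by
        have : a ++ (a ++ b₁) = a ++ (b₁ ++ a) := by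
          rw [hcomm]; simp [List.append_assoc]
        exact List.append_cancel_left this
      obtain ⟨t, i, j, hta, htb⟩ := ih a b₁ (by simp at hlen ⊢; omega) hcomm'
      exact ⟨t, i, i + j, hta, by rw [wpow_add', ← hta, ← htb]⟩
    · have hab : b <+: a :=
        List.prefix_of_prefix_length_le ⟨a, hcomm.symm⟩ (List.prefix_append a b) hle
      obtain ⟨a₁, rfl⟩ := hab
      have hcomm' : b ++ a₁ = a₁ ++ b := by
        have : b ++ (b ++ a₁) = b ++ (a₁ ++ b) := by
          rw [← hcomm]; simp [List.append_assoc]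
        exact List.append_cancel_left this
      obtain ⟨t, i, j, htb, hta⟩ := ih b a₁ (by simp at hlen ⊢; omega) hcomm'
      exact ⟨t, i + j, i, by rw [wpow_add', ← hta, ← htb], htb⟩

end Aux
/-- An aperiodic binary morphism T with T(1) a prefix of T(01) is
order-preserving or order-reversing on infinite words. -/
theorem stmt5 (T : Bool → List Bool) (hap : ¬ PeriodicM T)
    (hpre : T true <+: applyM T [false, true]) :
    (∀ u v : ℕ → Bool, InfLt u v → InfLt (applyInf T u) (applyInf T v)) ∨
    (∀ u v : ℕ → Bool, InfLt u v → InfLt (applyInf T v) (applyInf T u)) := by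
  classical
  have hbne : T true ≠ [] := by
    intro h
    exact hap ⟨T false, 1, 0, (wpow_one' _).symm, by simp [h, wpow]⟩
  have hane : T false ≠ [] := by
    intro h
    exact hap ⟨T true, 0, 1, by simp [h, wpow], (wpow_one' _).symm⟩
  have h1 : ∀ x, 1 ≤ (T x).length := by
    intro x
    cases x
    · exact List.length_pos_iff.2 hane
    · exact List.length_pos_iff.2 hbne
  set A : ℕ → Bool := applyInf T (fun _ => false) with hA_def
  set B : ℕ → Bool := applyInf T (fun n => decide (n = 0)) with hB_def
  -- basic facts about A and B
  have hshiftA : shiftW (fun _ : ℕ => false) 1 = (fun _ => false) := rfl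
  have hshiftB : shiftW (fun n : ℕ => decide (n = 0)) 1 = (fun _ => false) := by
    funext k; simp [shiftW]
  have hAper : ∀ j, A ((T false).length + j) = A j := by
    intro j
    have := applyInf_shift_one T h1 (fun _ => false) j
    rw [hshiftA] at this
    exact this
  have hApre : ∀ j < (T false).length, A j = (T false).getD j false := by
    intro j hj
    exact applyInf_prefix_letter T h1 (fun _ => false) j hj
  have hBshift : ∀ j, B ((T true).length + j) = A j := by
    intro j
    have := applyInf_shift_one T h1 (fun n => decide (n = 0)) j
    rw [hshiftB] at this
    simpa using this
  have hBpre : ∀ j < (T true).length, B j = (T true).getD j false := by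
    intro j hj
    have := applyInf_prefix_letter T h1 (fun n => decide (n = 0)) j (by simpa using hj)
    simpa using this
  -- b is a "prefix" of the infinite word A
  have hpre' : T true <+: T false ++ T true := by
    have : applyM T [false, true] = T false ++ T true := by
      show (List.map T [false, true]).flatten = _
      simp
    rwa [this] at hpre
  have hbA : ∀ j, j < (T true).length → (T true).getD j false = A j := by
    intro j
    induction j using Nat.strong_induction_on with
    | _ j ih =>
      intro hj
      have h2 : (T true).getD j false = (T false ++ T true).getD j false :=
        (getD_of_prefix hpre' hj).symm
      rcases lt_or_ge j (T false).length with hja | hja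
      · rw [h2, List.getD_append _ _ _ _ hja, ← hApre j hja]
      · rw [h2, List.getD_append_right _ _ _ _ hja,
          ih (j - (T false).length) (by have := h1 false; omega) (by omega)]
        have := hAper (j - (T false).length)
        rw [show (T false).length + (j - (T false).length) = j by omega] at this
        exact this.symm
  -- A and B differ somewhere, else T would be periodic
  have hAB : ∃ n, A n ≠ B n := by
    by_contra hcon
    push_neg at hcon
    apply hap
    have hAperB : ∀ j, A ((T true).length + j) = A j := by
      intro j
      rw [hcon ((T true).length + j), hBshift j]
    have habA : ∀ j, j < (T false).length + (T true).length →
        (T false ++ T true).getD j false = A j := by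
      intro j hj
      rcases lt_or_ge j (T false).length with hja | hja
      · rw [List.getD_append _ _ _ _ hja, ← hApre j hja]
      · rw [List.getD_append_right _ _ _ _ hja,
          hbA (j - (T false).length) (by omega)]
        have := hAper (j - (T false).length)
        rw [show (T false).length + (j - (T false).length) = j by omega] at this
        exact this.symm
    have hbaA : ∀ j, j < (T true).length + (T false).length →
        (T true ++ T false).getD j false = A j := by
      intro j hj
      rcases lt_or_ge j (T true).length with hjb | hjb
      · rw [List.getD_append _ _ _ _ hjb, hbA j hjb]
      · rw [List.getD_append_right _ _ _ _ hjb,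
          ← hApre (j - (T true).length) (by omega)]
        have := hAperB (j - (T true).length)
        rw [show (T true).length + (j - (T true).length) = j by omega] at this
        exact this.symm
    have hcomm : T false ++ T true = T true ++ T false := by
      apply List.ext_getElem (by simp [Nat.add_comm])
      intro i hi1 hi2
      rw [← List.getD_eq_getElem _ false hi1, ← List.getD_eq_getElem _ false hi2]
      rw [habA i (by simpa using hi1), hbaA i (by simpa using hi2)]
    obtain ⟨t, i, j, hti, htj⟩ :=
      comm_of_append_comm ((T false).length + (T true).length) (T false) (T true) le_rfl hcomm
    exact ⟨t, i, j, hti, htj⟩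
  set m := Nat.find hAB with hm_def
  have hm : A m ≠ B m := Nat.find_spec hAB
  have hmlt : ∀ j < m, A j = B j := by
    intro j hj
    have := Nat.find_min hAB hj
    simpa using this
  -- main claim: every image word agrees with A strictly before m
  have claim : ∀ j, j < m → ∀ u : ℕ → Bool, applyInf T u j = A j := by
    intro j
    induction j using Nat.strong_induction_on with
    | _ j ih =>
      intro hj u
      cases hu : u 0 with
      | false =>
        rcases lt_or_ge j (T false).length with hja | hja
        · rw [applyInf_prefix_letter T h1 u j (by rw [hu]; exact hja), hu, ← hApre j hja]
        · have hs := applyInf_shift_one T h1 u (j - (T (u 0)).length)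
          rw [hu] at hs
          rw [show (T false).length + (j - (T false).length) = j by omega] at hs
          rw [hs, ih (j - (T false).length) (by have := h1 false; omega) (by omega) _]
          have := hAper (j - (T false).length)
          rw [show (T false).length + (j - (T false).length) = j by omega] at this
          exact this.symm
      | true =>
        rcases lt_or_ge j (T true).length with hjb | hjb
        · rw [applyInf_prefix_letter T h1 u j (by rw [hu]; exact hjb), hu, hbA j hjb]
        · have hs := applyInf_shift_one T h1 u (j - (T (u 0)).length)
          rw [hu] at hs
          rw [show (T true).length + (j - (T true).length) = j by omega] at hs
          rw [hs, ih (j - (T true).length) (by have := h1 true; omega) (by omega) _]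
          have := hBshift (j - (T true).length)
          rw [show (T true).length + (j - (T true).length) = j by omega] at this
          rw [← this, hmlt j hj]
  -- values at position m
  have claimF : ∀ u : ℕ → Bool, u 0 = false → applyInf T u m = A m := by
    intro u hu
    rcases lt_or_ge m (T false).length with hja | hja
    · rw [applyInf_prefix_letter T h1 u m (by rw [hu]; exact hja), hu, ← hApre m hja]
    · have hs := applyInf_shift_one T h1 u (m - (T (u 0)).length)
      rw [hu] at hs
      rw [show (T false).length + (m - (T false).length) = m by omega] at hs
      rw [hs, claim (m - (T false).length) (by have := h1 false; omega) _]
      have := hAper (m - (T false).length)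
      rw [show (T false).length + (m - (T false).length) = m by omega] at this
      exact this.symm
  have claimT : ∀ u : ℕ → Bool, u 0 = true → applyInf T u m = B m := by
    intro u hu
    rcases lt_or_ge m (T true).length with hjb | hjb
    · rw [applyInf_prefix_letter T h1 u m (by rw [hu]; exact hjb), hu, ← hBpre m hjb]
    · have hs := applyInf_shift_one T h1 u (m - (T (u 0)).length)
      rw [hu] at hs
      rw [show (T true).length + (m - (T true).length) = m by omega] at hs
      rw [hs, claim (m - (T true).length) (by have := h1 true; omega) _]
      have := hBshift (m - (T true).length)
      rw [show (T true).length + (m - (T true).length) = m by omega] at this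
      exact this.symm
  -- key comparison lemma
  have key : ∀ u v : ℕ → Bool, InfLt u v → ∃ N,
      (∀ i < N, applyInf T u i = applyInf T v i) ∧
      applyInf T u N = A m ∧ applyInf T v N = B m := by
    rintro u v ⟨n, hagree, hlt⟩
    obtain ⟨hun, hvn⟩ := Bool.lt_iff.1 hlt
    have hmap : (List.range n).map u = (List.range n).map v := by
      apply List.map_congr_left
      intro x hx
      exact hagree x (List.mem_range.1 hx)
    set L := (applyM T ((List.range n).map u)).length with hL_def
    have hLv : (applyM T ((List.range n).map v)).length = L := by rw [← hmap]
    refine ⟨L + m, ?_, ?_, ?_⟩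
    · intro i hi
      rcases lt_or_ge i L with hiL | hiL
      · rw [applyInf_eq_getD T h1 u n i hiL, applyInf_eq_getD T h1 v n i (by omega), hmap]
      · have hu2 := applyInf_shift T h1 u n (i - L)
        rw [show L + (i - L) = i by omega] at hu2
        have hv2 := applyInf_shift T h1 v n (i - L)
        rw [← hmap, show L + (i - L) = i by omega] at hv2
        rw [hu2, hv2, claim (i - L) (by omega) _, claim (i - L) (by omega) _]
    · have hu2 := applyInf_shift T h1 u n m
      rw [← hL_def] at hu2
      rw [hu2]
      exact claimF _ (by simp [shiftW, hun])
    · have hv2 := applyInf_shift T h1 v n m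
      rw [← hmap, ← hL_def] at hv2
      rw [hv2]
      exact claimT _ (by simp [shiftW, hvn])
  cases hAm : A m with
  | false =>
    have hBm : B m = true := by
      cases hBm : B m
      · exact absurd (hAm.trans hBm.symm) hm
      · rfl
    left
    intro u v huv
    obtain ⟨N, hag, hu, hv⟩ := key u v huv
    exact ⟨N, hag, by rw [hu, hv, hAm, hBm]; exact Bool.false_lt_true⟩
  | true =>
    have hBm : B m = false := by
      cases hBm : B m
      · rfl
      · exact absurd (hAm.trans hBm.symm) hm
    right
    intro u v huv
    obtain ⟨N, hag, hu, hv⟩ := key u v huv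
    exact ⟨N, fun i hi => (hag i hi).symm, by rw [hu, hv, hAm, hBm]; exact Bool.false_lt_true⟩
end

section
/- Let x be a primitive word, k, ℓ ≥ 1 integers, and y a non-empty proper prefix of x. If a binary morphism T satisfies T(0) = x^k and T(1) = x^ℓ y, then T is aperiodic (T(0) and T(1) are not powers of a common word). -/
lemma wpow_zero {α : Type*} (x : List α) : wpow x 0 = [] := rfl

lemma wpow_succ {α : Type*} (x : List α) (n : ℕ) : wpow x (n+1) = x ++ wpow x n := by
  simp [wpow, List.replicate_succ]

lemma wpow_one {α : Type*} (x : List α) : wpow x 1 = x := by simp [wpow]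

lemma wpow_add {α : Type*} (x : List α) (m n : ℕ) :
    wpow x (m + n) = wpow x m ++ wpow x n := by
  induction m with
  | zero => simp [wpow_zero]
  | succ m ih => rw [Nat.succ_add, wpow_succ, ih, wpow_succ, List.append_assoc]

lemma length_wpow {α : Type*} (x : List α) (n : ℕ) : (wpow x n).length = n * x.length := by
  induction n with
  | zero => simp [wpow_zero]
  | succ n ih => rw [wpow_succ, List.length_append, ih]; ring

lemma wpow_wpow {α : Type*} (x : List α) (m n : ℕ) :
    wpow (wpow x m) n = wpow x (m * n) := by
  induction n with
  | zero => simp [wpow_zero]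
  | succ n ih => rw [wpow_succ, ih, Nat.mul_succ, Nat.add_comm, wpow_add]

lemma wpow_comm_base {α : Type*} (x : List α) (n : ℕ) :
    x ++ wpow x n = wpow x n ++ x := by
  have h1 : x ++ wpow x n = wpow x (1 + n) := by rw [wpow_add, wpow_one]
  have h2 : wpow x n ++ x = wpow x (n + 1) := by rw [wpow_add, wpow_one]
  rw [h1, h2, Nat.add_comm]

lemma prefix_trans_len {α : Type*} {u v w : List α} (hu : u <+: w) (hv : v <+: w)
    (h : u.length ≤ v.length) : u <+: v := by
  rw [List.prefix_iff_eq_take] at hu hv ⊢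
  rw [hv, List.take_take, min_eq_left h, ← hu]

lemma comm_root_aux {α : Type*} : ∀ n (u v : List α), u.length + v.length ≤ n →
    u ++ v = v ++ u → ∃ z a b, u = wpow z a ∧ v = wpow z b := by
  intro n
  induction n with
  | zero =>
    intro u v hn _
    have : u = [] ∧ v = [] := by
      constructor <;> (apply List.eq_nil_of_length_eq_zero; omega)
    exact ⟨[], 0, 0, by simp [this.1, wpow_zero], by simp [this.2, wpow_zero]⟩
  | succ n ih =>
    intro u v hn h
    rcases eq_or_ne u [] with hu | hu
    · exact ⟨v, 0, 1, by simp [hu, wpow_zero], by simp [wpow_one]⟩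
    rcases eq_or_ne v [] with hv | hv
    · exact ⟨u, 1, 0, by simp [wpow_one], by simp [hv, wpow_zero]⟩
    rcases le_total u.length v.length with hle | hle
    · have hpu : u <+: v ++ u := ⟨v, h⟩
      have huv : u <+: v := prefix_trans_len hpu (List.prefix_append v u) hle
      obtain ⟨w, hw⟩ := huv
      have h2 : u ++ w = w ++ u := by
        have : u ++ (u ++ w) = (u ++ w) ++ u := by rw [hw]; exact h
        simpa [List.append_assoc] using this
      have hlen : u.length + w.length ≤ n := by
        have := @List.length_append _ u w ▸ congrArg List.length hw
        have hul : 0 < u.length := List.length_pos_iff.mpr hu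
        omega
      obtain ⟨z, a, b, hz1, hz2⟩ := ih u w hlen h2
      exact ⟨z, a, a + b, hz1, by rw [← hw, wpow_add, hz1, hz2]⟩
    · have hpv : v <+: u ++ v := ⟨u, h.symm⟩
      have hvu : v <+: u := prefix_trans_len hpv (List.prefix_append u v) hle
      obtain ⟨w, hw⟩ := hvu
      have h2 : v ++ w = w ++ v := by
        have : v ++ (v ++ w) = (v ++ w) ++ v := by rw [hw]; exact h.symm
        simpa [List.append_assoc] using this
      have hlen : v.length + w.length ≤ n := by
        have := @List.length_append _ v w ▸ congrArg List.length hw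
        have hvl : 0 < v.length := List.length_pos_iff.mpr hv
        omega
      obtain ⟨z, a, b, hz1, hz2⟩ := ih v w hlen h2
      exact ⟨z, a + b, a, by rw [← hw, wpow_add, hz1, hz2], hz1⟩

lemma comm_root {α : Type*} (u v : List α) (h : u ++ v = v ++ u) :
    ∃ z a b, u = wpow z a ∧ v = wpow z b :=
  comm_root_aux (u.length + v.length) u v le_rfl h

lemma pow_comm {α : Type*} {x t : List α} {k i : ℕ} (h : wpow x k = wpow t i)
    (hk : 1 ≤ k) (hi : 1 ≤ i) : x ++ t = t ++ x := by
  rcases eq_or_lt_of_le hk with hk1 | hk2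
  · -- k = 1 : x = wpow t i
    have hx : x = wpow t i := by rw [← wpow_one x, hk1]; exact h
    rw [hx, wpow_comm_base]
  rcases eq_or_lt_of_le hi with hi1 | hi2
  · have ht : t = wpow x k := by rw [← wpow_one t, hi1]; exact h.symm
    rw [ht, ← wpow_comm_base]
  -- k, i ≥ 2
  have hxw : x ++ wpow x k = wpow x k ++ x := wpow_comm_base x k
  have htw : t ++ wpow x k = wpow x k ++ t := by rw [h]; exact wpow_comm_base t i
  have hxp : x <+: wpow x k := by
    obtain ⟨k', rfl⟩ : ∃ k', k = k' + 1 := ⟨k - 1, by omega⟩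
    rw [Nat.add_comm, wpow_add, wpow_one]; exact List.prefix_append x _
  have htp : t <+: wpow x k := by
    rw [h]
    obtain ⟨i', rfl⟩ : ∃ i', i = i' + 1 := ⟨i - 1, by omega⟩
    rw [Nat.add_comm, wpow_add, wpow_one]; exact List.prefix_append t _
  have hlw : x.length + t.length ≤ (wpow x k).length := by
    have h1 : (wpow x k).length = k * x.length := length_wpow x k
    have h2 : (wpow x k).length = i * t.length := by rw [h, length_wpow]
    nlinarith
  have hap : ∀ (a b c : List α), b <+: c → a ++ b <+: a ++ c := by
    rintro a b c ⟨s, hs⟩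
    exact ⟨s, by rw [List.append_assoc, hs]⟩
  have hp1 : x ++ t <+: wpow x k := by
    have h3 : x ++ t <+: x ++ wpow x k := hap x t _ htp
    rw [hxw] at h3
    exact prefix_trans_len h3 (List.prefix_append _ x) (by simpa using hlw)
  have hp2 : t ++ x <+: wpow x k := by
    have h3 : t ++ x <+: t ++ wpow x k := hap t x _ hxp
    rw [htw] at h3
    exact prefix_trans_len h3 (List.prefix_append _ t) (by simp; omega)
  have h4 := prefix_trans_len hp1 hp2 (by simp [Nat.add_comm])
  exact h4.eq_of_length (by simp [Nat.add_comm])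

/-- If x is primitive, k, ℓ ≥ 1, y a non-empty proper prefix of x,
T(0) = x^k and T(1) = x^ℓ y, then T is aperiodic. -/
theorem stmt17 (T : Bool → List Bool) (x y : List Bool) (k l : ℕ)
    (hprim : PrimitiveW x) (hk : 1 ≤ k) (hl : 1 ≤ l)
    (hy : y ≠ []) (hpre : y <+: x) (hyx : y ≠ x)
    (h0 : T false = wpow x k) (h1 : T true = wpow x l ++ y) :
    ¬ PeriodicM T := by
  rintro ⟨t, i, j, hfi, htj⟩
  rw [h0] at hfi
  rw [h1] at htj
  have hxne : x ≠ [] := by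
    rintro rfl
    exact hy (List.prefix_nil.mp hpre)
  have hxpos : 0 < x.length := List.length_pos_iff.mpr hxne
  have hypos : 0 < y.length := List.length_pos_iff.mpr hy
  have hylt : y.length < x.length :=
    lt_of_le_of_ne hpre.length_le (fun he => hyx (hpre.eq_of_length he))
  have hcomm : wpow t i ++ wpow t j = wpow t j ++ wpow t i := by
    rw [← wpow_add, ← wpow_add, Nat.add_comm]
  rw [← hfi, ← htj] at hcomm
  have h5 : wpow x l ++ (wpow x k ++ y) = wpow x l ++ (y ++ wpow x k) := by
    calc wpow x l ++ (wpow x k ++ y) = wpow x (l + k) ++ y := by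
          rw [wpow_add, List.append_assoc]
      _ = wpow x (k + l) ++ y := by rw [Nat.add_comm]
      _ = wpow x k ++ (wpow x l ++ y) := by rw [wpow_add, List.append_assoc]
      _ = (wpow x l ++ y) ++ wpow x k := hcomm
      _ = wpow x l ++ (y ++ wpow x k) := by rw [List.append_assoc]
  have hkey : wpow x k ++ y = y ++ wpow x k := List.append_cancel_left h5
  obtain ⟨z, a, b, hz1, hz2⟩ := comm_root _ _ hkey
  have ha : 1 ≤ a := by
    rcases Nat.eq_zero_or_pos a with h | h
    · exfalso
      rw [h, wpow_zero] at hz1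
      have := congrArg List.length hz1
      rw [length_wpow] at this
      rcases Nat.mul_eq_zero.mp (by simpa using this : k * x.length = 0) with h' | h' <;> omega
    · exact h
  have hxz : x ++ z = z ++ x := pow_comm hz1 hk ha
  obtain ⟨r, c, d, hr1, hr2⟩ := comm_root x z hxz
  have hc : c = 1 := by
    have hc1 : 1 ≤ c := by
      rcases Nat.eq_zero_or_pos c with h | h
      · exfalso; rw [h, wpow_zero] at hr1; exact hxne hr1
      · exact h
    by_contra hne
    exact hprim r c (by omega) hr1
  rw [hc, wpow_one] at hr1
  have hyw : y = wpow x (d * b) := by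
    rw [hz2, hr2, hr1, wpow_wpow]
  have hylen : y.length = d * b * x.length := by rw [hyw, length_wpow]
  rcases Nat.eq_zero_or_pos (d * b) with h | h
  · rw [h, Nat.zero_mul] at hylen; omega
  · have hle : x.length ≤ y.length := by
      rw [hylen]; exact Nat.le_mul_of_pos_left _ h
    omega
end
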